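/- Let (Ω, P) be a probability space, p ∈ (0,1), H ∈ (1/2, 1), c > 0, and let (ξ_i)_{i≥1} be a sequence of random variables taking values in {0,1} almost surely with P(ξ_i = 1) = p for all i and P(ξ_i = 1, ξ_j = 1) = p(p + c|i − j|^{2H−2}) for all i ≠ j. Then Var(ξ_1 + ⋯ + ξ_N)/N^{2H} → p·c/(H(2H − 1)) as N → ∞; in particular the variance of the fractional binomial variable B_N(p, H, c) is asymptotically proportional to N raised to the fractional power 2H. -/

import Mathlib

open MeasureTheory ProbabilityTheory Filter

lemma gbp_sum_dist (f : ℕ → ℝ) (hf : f 0 = 0) (N : ℕ) :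
    ∑ i ∈ Finset.range N, ∑ j ∈ Finset.range N, f (Nat.dist i j)
      = 2 * ∑ k ∈ Finset.range N, ((N : ℝ) - k) * f k := by
  induction N with
  | zero => simp
  | succ N ih =>
    have hrefl : ∑ j ∈ Finset.range N, f (N - j) = ∑ k ∈ Finset.range N, f (k + 1) := by
      rw [← Finset.sum_range_reflect (fun k => f (k + 1)) N]
      exact Finset.sum_congr rfl fun j hj => by
        rw [Finset.mem_range] at hj; congr 1; omega
    have e1 : ∑ i ∈ Finset.range (N+1), ∑ j ∈ Finset.range (N+1), f (Nat.dist i j)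
        = (∑ i ∈ Finset.range N, ∑ j ∈ Finset.range N, f (Nat.dist i j))
          + ∑ i ∈ Finset.range N, f (N - i) + (∑ j ∈ Finset.range N, f (N - j) + f 0) := by
      rw [Finset.sum_range_succ]
      congr 1
      · rw [← Finset.sum_add_distrib]
        exact Finset.sum_congr rfl fun i hi => by
          rw [Finset.sum_range_succ,
            Nat.dist_eq_sub_of_le (Nat.le_of_lt (Finset.mem_range.1 hi))]
      · rw [Finset.sum_range_succ, Nat.dist_self]
        congr 1
        exact Finset.sum_congr rfl fun j hj => by
          rw [Nat.dist_eq_sub_of_le_right (Nat.le_of_lt (Finset.mem_range.1 hj))]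
    have e2 : ∑ k ∈ Finset.range (N+1), (((N+1 : ℕ) : ℝ) - k) * f k
        = ∑ k ∈ Finset.range N, ((N : ℝ) - k) * f k + ∑ k ∈ Finset.range (N+1), f k := by
      rw [Finset.sum_range_succ (fun k => (((N+1:ℕ):ℝ) - k) * f k),
        Finset.sum_range_succ f N,
        Finset.sum_congr rfl (fun (k:ℕ) (_ : k ∈ Finset.range N) =>
          (by push_cast; ring : ((↑(N+1):ℝ) - k) * f k = ((N:ℝ) - k) * f k + f k)),
        Finset.sum_add_distrib]
      push_cast
      ring
    have e3 : ∑ k ∈ Finset.range N, f (k + 1) = ∑ k ∈ Finset.range (N+1), f k := by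
      rw [Finset.sum_range_succ' f N, hf]; ring
    rw [e1, ih, hrefl, e3, e2, hf]
    ring

lemma gbp_riemann (α : ℝ) (h1 : -1 < α) (h2 : α < 0) :
    Tendsto (fun N : ℕ => (∑ k ∈ Finset.range N, ((N : ℝ) - k) * (k : ℝ) ^ α) / (N : ℝ) ^ (α + 2))
      atTop (nhds (1 / ((α + 1) * (α + 2)))) := by
  have ha1 : (0:ℝ) < α + 1 := by linarith
  have ha2 : (0:ℝ) < α + 2 := by linarith
  set C : ℝ := 1 / ((α + 1) * (α + 2)) with hC
  have key : ∀ N : ℕ, 2 ≤ N →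
      ((N:ℝ)) ^ (α + 2) * C - (N:ℝ) / (α + 1)
        ≤ (∑ k ∈ Finset.range N, ((N : ℝ) - k) * (k : ℝ) ^ α)
      ∧ (∑ k ∈ Finset.range N, ((N : ℝ) - k) * (k : ℝ) ^ α)
        ≤ (N:ℝ) + ((N:ℝ)) ^ (α + 2) * C := by
    intro N hN
    set n : ℝ := (N : ℝ) with hn
    have hn2 : (2:ℝ) ≤ n := by rw [hn]; exact_mod_cast hN
    have hn0' : (0:ℝ) < n := by linarith
    set g : ℝ → ℝ := fun x => n * x ^ α - x ^ (α + 1) with hg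
    have hgpos : ∀ x : ℝ, 0 < x → g x = (n - x) * x ^ α := by
      intro x hx
      simp only [hg, Real.rpow_add_one hx.ne']
      ring
    have hg_nonneg : ∀ x ∈ Set.Icc (0:ℝ) n, 0 ≤ g x := by
      rintro x ⟨hx0, hxn⟩
      rcases eq_or_lt_of_le hx0 with h | h
      · simp [hg, ← h, Real.zero_rpow h2.ne, Real.zero_rpow ha1.ne']
      · rw [hgpos x h]
        exact mul_nonneg (by linarith) (Real.rpow_nonneg hx0 _)
    have hg_anti : AntitoneOn g (Set.Icc (1:ℝ) n) := by
      rintro x ⟨hx1, hxn⟩ y ⟨hy1, hyn⟩ hxy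
      have hx0 : (0:ℝ) < x := by linarith
      have hy0 : (0:ℝ) < y := by linarith
      rw [hgpos x hx0, hgpos y hy0]
      exact mul_le_mul (by linarith) (Real.rpow_le_rpow_of_nonpos hx0 hxy h2.le)
        (Real.rpow_nonneg hy0.le _) (by linarith)
    have hg_int : ∀ a b : ℝ, IntervalIntegrable g volume a b := fun a b =>
      ((intervalIntegral.intervalIntegrable_rpow' h1).const_mul n).sub
        (intervalIntegral.intervalIntegrable_rpow' (by linarith))
    have hint : ∀ a b : ℝ, ∫ x in a..b, g x
        = n * ((b ^ (α + 1) - a ^ (α + 1)) / (α + 1)) - (b ^ (α + 2) - a ^ (α + 2)) / (α + 2) := by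
      intro a b
      rw [hg, intervalIntegral.integral_sub
        ((intervalIntegral.intervalIntegrable_rpow' h1).const_mul n)
        (intervalIntegral.intervalIntegrable_rpow' (by linarith)),
        intervalIntegral.integral_const_mul, integral_rpow (Or.inl h1)]
      congr 1
      rw [show α + 2 = (α + 1) + 1 by ring, integral_rpow (Or.inl (by linarith))]
    have hI0 : ∫ x in (0:ℝ)..n, g x = n ^ (α + 2) * C := by
      have hx : n ^ (α + 2) = n * n ^ (α + 1) := by
        rw [show α + 2 = 1 + (α + 1) by ring, Real.rpow_add hn0', Real.rpow_one]
      rw [hint, Real.zero_rpow ha1.ne', Real.zero_rpow ha2.ne', hC, hx]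
      generalize n ^ (α + 1) = A
      field_simp
      ring
    have hR : (∑ k ∈ Finset.range N, ((N : ℝ) - k) * (k : ℝ) ^ α)
        = ∑ i ∈ Finset.range (N - 1), g (1 + (i : ℕ)) := by
      rw [show Finset.range N = Finset.range ((N-1)+1) from by rw [Nat.sub_add_cancel (by omega)],
        Finset.sum_range_succ' (fun k => ((N:ℝ) - k) * (k:ℝ) ^ α) (N - 1)]
      rw [Nat.cast_zero, Real.zero_rpow h2.ne, mul_zero, add_zero]
      apply Finset.sum_congr rfl
      intro i _
      rw [hgpos _ (by positivity)]
      push_cast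
      ring_nf
      rw [hn]
      ring
    have hcast : (1:ℝ) + ((N-1:ℕ):ℝ) = n := by
      rw [hn]; push_cast [Nat.cast_sub (by omega : 1 ≤ N)]; ring
    constructor
    · -- lower bound
      have hle : ∫ x in (1:ℝ)..(1 + ((N-1 : ℕ):ℝ)), g x
          ≤ ∑ i ∈ Finset.range (N - 1), g (1 + (i : ℕ)) := by
        apply AntitoneOn.integral_le_sum
        rw [hcast]; exact hg_anti
      rw [hcast] at hle
      rw [hR]
      refine le_trans ?_ hle
      have hsplit : (∫ x in (0:ℝ)..n, g x)
          = (∫ x in (0:ℝ)..(1:ℝ), g x) + ∫ x in (1:ℝ)..n, g x :=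
        (intervalIntegral.integral_add_adjacent_intervals (hg_int 0 1) (hg_int 1 n)).symm
      have h01 : ∫ x in (0:ℝ)..(1:ℝ), g x ≤ n / (α + 1) := by
        have hmono : ∫ x in (0:ℝ)..(1:ℝ), g x ≤ ∫ x in (0:ℝ)..(1:ℝ), n * x ^ α := by
          apply intervalIntegral.integral_mono_on (by norm_num) (hg_int 0 1)
            ((intervalIntegral.intervalIntegrable_rpow' h1).const_mul n)
          intro x hx
          have : (0:ℝ) ≤ x ^ (α + 1) := Real.rpow_nonneg hx.1 _
          simp only [hg]
          linarith
        refine hmono.trans (le_of_eq ?_)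
        rw [intervalIntegral.integral_const_mul, integral_rpow (Or.inl h1),
          Real.one_rpow, Real.zero_rpow ha1.ne']
        ring
      linarith [hI0, hsplit]
    · -- upper bound
      rw [hR]
      have hm : (1:ℝ) + ((N-2:ℕ):ℝ) = ((N-1:ℕ):ℝ) := by
        push_cast [Nat.cast_sub (by omega : 2 ≤ N), Nat.cast_sub (by omega : 1 ≤ N)]; ring
      have hm_le : ((N-1:ℕ):ℝ) ≤ n := by
        rw [hn]; exact_mod_cast Nat.sub_le N 1
      have hsum : ∑ i ∈ Finset.range (N - 1), g (1 + (i : ℕ))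
          = g 1 + ∑ i ∈ Finset.range (N - 2), g (1 + ((i+1 : ℕ) : ℝ)) := by
        rw [show N - 1 = (N-2)+1 from by omega,
          Finset.sum_range_succ' (fun i => g (1 + (i : ℕ))) (N - 2)]
        rw [Nat.cast_zero, add_zero, add_comm]
      have hg1 : g 1 = n - 1 := by
        simp [hg, Real.one_rpow]
      have hle2 : ∑ i ∈ Finset.range (N - 2), g (1 + ((i+1 : ℕ) : ℝ))
          ≤ ∫ x in (1:ℝ)..(1 + ((N-2 : ℕ):ℝ)), g x := by
        apply AntitoneOn.sum_le_integral
        apply hg_anti.mono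
        apply Set.Icc_subset_Icc le_rfl
        rw [hm]; exact hm_le
      rw [hm] at hle2
      have hnn1 : 0 ≤ ∫ x in (0:ℝ)..(1:ℝ), g x := by
        apply intervalIntegral.integral_nonneg (by norm_num)
        intro u hu
        exact hg_nonneg u ⟨hu.1, le_trans hu.2 (by linarith)⟩
      have hnn2 : 0 ≤ ∫ x in (((N-1:ℕ):ℝ))..n, g x := by
        apply intervalIntegral.integral_nonneg hm_le
        intro u hu
        exact hg_nonneg u ⟨le_trans (by positivity) hu.1, hu.2⟩
      have hsplit2 : (∫ x in (0:ℝ)..n, g x)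
          = ((∫ x in (0:ℝ)..(1:ℝ), g x) + ∫ x in (1:ℝ)..(((N-1:ℕ):ℝ)), g x)
            + ∫ x in (((N-1:ℕ):ℝ))..n, g x := by
        rw [intervalIntegral.integral_add_adjacent_intervals (hg_int 0 1) (hg_int 1 _),
          intervalIntegral.integral_add_adjacent_intervals (hg_int 0 _) (hg_int _ n)]
      rw [hsum, hg1]
      have := hI0
      linarith
  have hn0 : Tendsto (fun N : ℕ => ((N : ℝ)) ^ (-(α + 1))) atTop (nhds 0) :=
    (tendsto_rpow_neg_atTop ha1).comp tendsto_natCast_atTop_atTop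
  have hlow : Tendsto (fun N : ℕ => C - (1 / (α + 1)) * ((N : ℝ)) ^ (-(α + 1))) atTop (nhds C) := by
    have := tendsto_const_nhds (α := ℕ) (x := C) (f := atTop) |>.sub (hn0.const_mul (1 / (α + 1)))
    simpa using this
  have hup : Tendsto (fun N : ℕ => C + ((N : ℝ)) ^ (-(α + 1))) atTop (nhds C) := by
    have := tendsto_const_nhds (α := ℕ) (x := C) (f := atTop) |>.add hn0
    simpa using this
  refine tendsto_of_tendsto_of_tendsto_of_le_of_le' hlow hup ?_ ?_
  · filter_upwards [eventually_ge_atTop 2] with N hN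
    have hNpos : (0:ℝ) < (N:ℝ) := by exact_mod_cast (by omega : 0 < N)
    have hpow : (0:ℝ) < ((N:ℝ)) ^ (α + 2) := Real.rpow_pos_of_pos hNpos _
    have hmul : ((N:ℝ)) ^ (-(α + 1)) * ((N:ℝ)) ^ (α + 2) = (N:ℝ) := by
      rw [← Real.rpow_add hNpos, show -(α+1) + (α+2) = 1 by ring, Real.rpow_one]
    rw [le_div_iff₀ hpow]
    calc (C - 1 / (α + 1) * ((N:ℝ)) ^ (-(α + 1))) * ((N:ℝ)) ^ (α + 2)
        = ((N:ℝ)) ^ (α + 2) * C - (((N:ℝ)) ^ (-(α + 1)) * ((N:ℝ)) ^ (α + 2)) / (α + 1) := by ring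
      _ = ((N:ℝ)) ^ (α + 2) * C - (N:ℝ) / (α + 1) := by rw [hmul]
      _ ≤ _ := (key N hN).1
  · filter_upwards [eventually_ge_atTop 2] with N hN
    have hNpos : (0:ℝ) < (N:ℝ) := by exact_mod_cast (by omega : 0 < N)
    have hpow : (0:ℝ) < ((N:ℝ)) ^ (α + 2) := Real.rpow_pos_of_pos hNpos _
    have hmul : ((N:ℝ)) ^ (-(α + 1)) * ((N:ℝ)) ^ (α + 2) = (N:ℝ) := by
      rw [← Real.rpow_add hNpos, show -(α+1) + (α+2) = 1 by ring, Real.rpow_one]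
    rw [div_le_iff₀ hpow]
    calc (∑ k ∈ Finset.range N, ((N : ℝ) - k) * (k : ℝ) ^ α)
        ≤ (N:ℝ) + ((N:ℝ)) ^ (α + 2) * C := (key N hN).2
      _ = (C + ((N:ℝ)) ^ (-(α + 1))) * ((N:ℝ)) ^ (α + 2) := by rw [add_mul, hmul]; ring

/-- For a GBP with `p ∈ (0,1)`, `H ∈ (1/2, 1)`, `c > 0`, the variance of
`B_N = ξ_1 + ⋯ + ξ_N` satisfies `Var(B_N)/N^(2H) → p·c/(H(2H − 1))` as `N → ∞`. -/
theorem gbp_variance_asymptotics_lrd {Ω : Type*} [MeasurableSpace Ω] (P : Measure Ω)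
    [IsProbabilityMeasure P] (p H c : ℝ) (hp0 : 0 < p) (hp1 : p < 1)
    (hH0 : 1 / 2 < H) (hH1 : H < 1) (hc : 0 < c)
    (ξ : ℕ → Ω → ℝ) (hm : ∀ i, Measurable (ξ i))
    (h01 : ∀ i, ∀ᵐ ω ∂P, ξ i ω = 0 ∨ ξ i ω = 1)
    (hP1 : ∀ i, P {ω | ξ i ω = 1} = ENNReal.ofReal p)
    (hP2 : ∀ i j, i ≠ j → P ({ω | ξ i ω = 1} ∩ {ω | ξ j ω = 1}) =
      ENNReal.ofReal (p * (p + c * |(i : ℝ) - (j : ℝ)| ^ (2 * H - 2)))) :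
    Tendsto
      (fun N : ℕ => variance (fun ω => ∑ i ∈ Finset.range N, ξ i ω) P / (N : ℝ) ^ (2 * H))
      atTop (nhds (p * c / (H * (2 * H - 1)))) := by
  have hα1 : (-1:ℝ) < 2 * H - 2 := by linarith
  have hα2 : 2 * H - 2 < 0 := by linarith
  have hAm : ∀ i, MeasurableSet {ω | ξ i ω = 1} := fun i => hm i (measurableSet_singleton 1)
  have hind : ∀ i, ξ i =ᵐ[P] Set.indicator {ω | ξ i ω = 1} (fun _ => (1:ℝ)) := by
    intro i
    filter_upwards [h01 i] with ω hω
    rcases hω with h | h <;> simp [Set.indicator_apply, h]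
  have hmulind : ∀ i j, (fun ω => ξ i ω * ξ j ω)
      =ᵐ[P] Set.indicator ({ω | ξ i ω = 1} ∩ {ω | ξ j ω = 1}) (fun _ => (1:ℝ)) := by
    intro i j
    filter_upwards [h01 i, h01 j] with ω hi hj
    rcases hi with hi | hi <;> rcases hj with hj | hj <;>
      simp [Set.indicator_apply, Set.mem_setOf_eq, hi, hj]
  have hintg : ∀ i j, Integrable (fun ω => ξ i ω * ξ j ω) P := fun i j =>
    (((integrable_const (1:ℝ)).indicator ((hAm i).inter (hAm j))).congr (hmulind i j).symm)
  have hintg1 : ∀ i, Integrable (ξ i) P := fun i =>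
    ((integrable_const (1:ℝ)).indicator (hAm i)).congr (hind i).symm
  have hE1 : ∀ i, ∫ ω, ξ i ω ∂P = p := by
    intro i
    rw [integral_congr_ae (hind i)]
    rw [show (Set.indicator {ω | ξ i ω = 1} (fun _ => (1:ℝ))) = Set.indicator {ω | ξ i ω = 1} 1
      from rfl]
    rw [integral_indicator_one (hAm i), measureReal_def, hP1 i, ENNReal.toReal_ofReal hp0.le]
  have hE2 : ∀ i j, ∫ ω, ξ i ω * ξ j ω ∂P
      = if i = j then p else p * (p + c * |(i : ℝ) - (j : ℝ)| ^ (2 * H - 2)) := by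
    intro i j
    by_cases hij : i = j
    · subst hij
      rw [if_pos rfl]
      have hsq : (fun ω => ξ i ω * ξ i ω) =ᵐ[P] ξ i := by
        filter_upwards [h01 i] with ω h
        rcases h with h | h <;> rw [h] <;> norm_num
      rw [integral_congr_ae hsq, hE1]
    · rw [if_neg hij, integral_congr_ae (hmulind i j)]
      rw [show (Set.indicator ({ω | ξ i ω = 1} ∩ {ω | ξ j ω = 1}) (fun _ => (1:ℝ)))
        = Set.indicator ({ω | ξ i ω = 1} ∩ {ω | ξ j ω = 1}) 1 from rfl]
      rw [integral_indicator_one ((hAm i).inter (hAm j)), measureReal_def, hP2 i j hij,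
        ENNReal.toReal_ofReal]
      have : (0:ℝ) ≤ |(i : ℝ) - (j : ℝ)| ^ (2 * H - 2) := Real.rpow_nonneg (abs_nonneg _) _
      positivity
  have hmem : ∀ i, MemLp (ξ i) 2 P := by
    intro i
    refine MemLp.of_bound (hm i).aestronglyMeasurable 1 ?_
    filter_upwards [h01 i] with ω h
    rcases h with h | h <;> rw [h] <;> norm_num
  have hdist : ∀ i j : ℕ, ((Nat.dist i j : ℕ) : ℝ) = |(i:ℝ) - (j:ℝ)| := by
    intro i j
    rcases le_total i j with h | h
    · rw [Nat.dist_eq_sub_of_le h, Nat.cast_sub h, abs_sub_comm,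
        abs_of_nonneg (sub_nonneg.mpr (by exact_mod_cast h))]
    · rw [Nat.dist_eq_sub_of_le_right h, Nat.cast_sub h,
        abs_of_nonneg (sub_nonneg.mpr (by exact_mod_cast h))]
  set f : ℕ → ℝ := fun k => (k:ℝ) ^ (2 * H - 2) with hf
  have hf0 : f 0 = 0 := by
    simp only [hf, Nat.cast_zero]
    exact Real.zero_rpow (by linarith)
  -- variance formula
  have hvar : ∀ N : ℕ, variance (fun ω => ∑ i ∈ Finset.range N, ξ i ω) P
      = N * (p * (1 - p)) + p * c * (2 * ∑ k ∈ Finset.range N, ((N : ℝ) - k) * f k) := by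
    intro N
    rw [variance_eq_sub (memLp_finset_sum _ (fun i _ => hmem i))]
    have hEX : (∫ ω, (∑ i ∈ Finset.range N, ξ i ω) ∂P) = N * p := by
      rw [integral_finset_sum _ (fun i _ => hintg1 i)]
      simp [hE1, Finset.sum_const]
    have hEX2 : (∫ ω, (∑ i ∈ Finset.range N, ξ i ω) ^ 2 ∂P)
        = ∑ i ∈ Finset.range N, ∑ j ∈ Finset.range N, ∫ ω, ξ i ω * ξ j ω ∂P := by
      have : (fun ω => (∑ i ∈ Finset.range N, ξ i ω) ^ 2)
          = fun ω => ∑ i ∈ Finset.range N, ∑ j ∈ Finset.range N, ξ i ω * ξ j ω := by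
        funext ω
        rw [sq, Finset.sum_mul_sum]
      rw [this, integral_finset_sum _ (fun i _ => integrable_finset_sum _ (fun j _ => hintg i j))]
      exact Finset.sum_congr rfl fun i _ =>
        integral_finset_sum _ (fun j _ => hintg i j)
    have hterm : ∀ i j : ℕ, (∫ ω, ξ i ω * ξ j ω ∂P)
        = p * p + p * c * f (Nat.dist i j) + (if i = j then p - p * p else 0) := by
      intro i j
      rw [hE2]
      by_cases hij : i = j
      · subst hij
        rw [if_pos rfl, if_pos rfl, Nat.dist_self, hf0]
        ring
      · rw [if_neg hij, if_neg hij, hf, ← hdist i j]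
        ring
    have hsum : ∑ i ∈ Finset.range N, ∑ j ∈ Finset.range N, (∫ ω, ξ i ω * ξ j ω ∂P)
        = N * N * (p * p) + p * c * (∑ i ∈ Finset.range N, ∑ j ∈ Finset.range N, f (Nat.dist i j))
          + N * (p - p * p) := by
      simp_rw [hterm]
      have hinner : ∀ i ∈ Finset.range N,
          ∑ j ∈ Finset.range N, (p * p + p * c * f (Nat.dist i j) + if i = j then p - p * p else 0)
            = (N:ℝ) * (p * p) + p * c * (∑ j ∈ Finset.range N, f (Nat.dist i j)) + (p - p * p) := by
        intro i hi
        rw [Finset.sum_add_distrib, Finset.sum_add_distrib, Finset.sum_const, ← Finset.mul_sum,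
          Finset.sum_ite_eq (Finset.range N) i (fun _ => p - p * p), if_pos hi]
        simp [Finset.card_range, nsmul_eq_mul]
      rw [Finset.sum_congr rfl hinner, Finset.sum_add_distrib, Finset.sum_add_distrib,
        Finset.sum_const, Finset.sum_const, ← Finset.mul_sum]
      simp only [Finset.card_range, nsmul_eq_mul]
      push_cast
      ring
    simp only [Pi.pow_apply] at *
    rw [hEX2, hEX, hsum, gbp_sum_dist f hf0 N]
    ring
  -- limits
  have t1 : Tendsto (fun N : ℕ => (N : ℝ) / (N : ℝ) ^ (2 * H)) atTop (nhds 0) := by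
    have h := (tendsto_rpow_neg_atTop (by linarith : (0:ℝ) < 2 * H - 1)).comp
      tendsto_natCast_atTop_atTop
    apply h.congr'
    filter_upwards [eventually_ge_atTop 1] with N hN
    have hNpos : (0:ℝ) < (N:ℝ) := by exact_mod_cast (by omega : 0 < N)
    simp only [Function.comp_apply]
    rw [eq_div_iff (Real.rpow_pos_of_pos hNpos (2 * H)).ne', ← Real.rpow_add hNpos,
      show -(2 * H - 1) + 2 * H = 1 by ring, Real.rpow_one]
  have t2 := gbp_riemann (2 * H - 2) hα1 hα2
  rw [show (2 * H - 2) + 2 = 2 * H by ring] at t2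
  have hmain := (t1.const_mul (p * (1 - p))).add (t2.const_mul (2 * p * c))
  have hlim : p * (1 - p) * 0 + 2 * p * c * (1 / ((2 * H - 2 + 1) * (2 * H)))
      = p * c / (H * (2 * H - 1)) := by
    have h1 : (2 * H - 2 + 1) ≠ 0 := by linarith
    have h2 : H ≠ 0 := by linarith
    have h3 : 2 * H - 1 ≠ 0 := by linarith
    rw [mul_zero, zero_add, show (2 * H - 2 + 1) = 2 * H - 1 by ring]
    field_simp
  rw [hlim] at hmain
  apply hmain.congr
  intro N
  rw [hvar N]
  simp only [hf]
  ring
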